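/- Let Ω be a finite set with n = |Ω| and let E_0, …, E_d ∈ ℂ^{Ω×Ω} be Hermitian matrices with E_ℓ·E_k = δ_{ℓk}·E_k for all ℓ, k, and suppose E_i ∘ E_j = (1/n)·Σ_{ℓ=0}^d q_{ij}^ℓ·E_ℓ for complex numbers q_{ij}^ℓ, where ∘ is the entrywise (Schur) product. If tr(E_k) is a positive real number, then q_{ij}^k is a nonnegative real number. (The Krein parameters of a commutative, not necessarily symmetric, association scheme are nonnegative.) -/
import Mathlib


open scoped BigOperators
open Matrix

noncomputable section

private lemma stmt16_comm5 {Ω : Type*} [Fintype Ω] (f : Ω → Ω → Ω → Ω → Ω → ℂ) :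
    (∑ x : Ω, ∑ y : Ω, ∑ z : Ω, ∑ t : Ω, ∑ s : Ω, f x y z t s)
      = ∑ z : Ω, ∑ s : Ω, ∑ t : Ω, ∑ y : Ω, ∑ x : Ω, f x y z t s := by
  let e : (Ω × Ω × Ω × Ω × Ω) ≃ (Ω × Ω × Ω × Ω × Ω) :=
    { toFun := fun p => (p.2.2.1, p.2.2.2.2, p.2.2.2.1, p.2.1, p.1)
      invFun := fun q => (q.2.2.2.2, q.2.2.2.1, q.1, q.2.2.1, q.2.1)
      left_inv := fun p => rfl
      right_inv := fun q => rfl }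
  rw [show (∑ x : Ω, ∑ y : Ω, ∑ z : Ω, ∑ t : Ω, ∑ s : Ω, f x y z t s)
      = ∑ p : Ω × Ω × Ω × Ω × Ω, f p.1 p.2.1 p.2.2.1 p.2.2.2.1 p.2.2.2.2 by
    simp [Fintype.sum_prod_type]]
  rw [show (∑ z : Ω, ∑ s : Ω, ∑ t : Ω, ∑ y : Ω, ∑ x : Ω, f x y z t s)
      = ∑ q : Ω × Ω × Ω × Ω × Ω, f q.2.2.2.2 q.2.2.2.1 q.1 q.2.2.1 q.2.1 by
    simp [Fintype.sum_prod_type]]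
  exact Fintype.sum_equiv e _ _ (fun p => rfl)

/-- Trace of `(A ∘ B) * C` for Hermitian idempotents is a sum of `normSq`s. -/
private lemma stmt16_key {Ω : Type*} [Fintype Ω] (A B C : Matrix Ω Ω ℂ)
    (hA : Aᴴ = A) (hB : Bᴴ = B) (hC : Cᴴ = C)
    (hA2 : A * A = A) (hB2 : B * B = B) (hC2 : C * C = C) :
    Matrix.trace (A.hadamard B * C)
      = ∑ z : Ω, ∑ s : Ω, ∑ t : Ω,
          ((Complex.normSq (∑ x : Ω, A x s * B x t * (starRingEnd ℂ) (C x z)) : ℝ) : ℂ) := by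
  have hmc : ∀ (M : Matrix Ω Ω ℂ), Mᴴ = M → ∀ x y : Ω, M x y = (starRingEnd ℂ) (M y x) := by
    intro M hM x y
    conv_lhs => rw [← hM]
    rfl
  have entry : ∀ (M : Matrix Ω Ω ℂ), Mᴴ = M → M * M = M →
      ∀ x y : Ω, M x y = ∑ s : Ω, M x s * (starRingEnd ℂ) (M y s) := by
    intro M hM hM2 x y
    conv_lhs => rw [← hM2]
    rw [Matrix.mul_apply]
    exact Finset.sum_congr rfl fun s _ => by rw [hmc M hM s y]
  have lhs : Matrix.trace (A.hadamard B * C)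
      = ∑ x : Ω, ∑ y : Ω, A x y * B x y * C y x := by
    simp [Matrix.trace, Matrix.mul_apply, Matrix.hadamard_apply, Matrix.diag]
  rw [lhs]
  rw [Finset.sum_congr rfl fun x (_ : x ∈ Finset.univ) => Finset.sum_congr rfl
    fun y (_ : y ∈ Finset.univ) => by
      rw [entry A hA hA2 x y, entry B hB hB2 x y, entry C hC hC2 y x]]
  rw [Finset.sum_congr rfl fun z (_ : z ∈ Finset.univ) => Finset.sum_congr rfl
    fun s (_ : s ∈ Finset.univ) => Finset.sum_congr rfl fun t (_ : t ∈ Finset.univ) => by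
      rw [← Complex.mul_conj (∑ x : Ω, A x s * B x t * (starRingEnd ℂ) (C x z)), map_sum]]
  simp only [Finset.sum_mul, Finset.mul_sum, _root_.map_mul, RingHomInvPair.comp_apply_eq,
    Complex.conj_conj, map_sum]
  rw [stmt16_comm5 (fun x y z t s =>
    A x s * (starRingEnd ℂ) (A y s) * (B x t * (starRingEnd ℂ) (B y t))
      * (C y z * (starRingEnd ℂ) (C x z)))]
  refine Finset.sum_congr rfl fun z _ => Finset.sum_congr rfl fun s _ =>
    Finset.sum_congr rfl fun t _ => Finset.sum_congr rfl fun y _ =>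
    Finset.sum_congr rfl fun x _ => by ring

/-- **Nonnegativity of the Krein parameters** of a commutative (not necessarily
symmetric) association scheme: if `tr(E_k)` is a positive real then `q_{ij}^k`
is a nonnegative real number. -/
theorem stmt16 {Ω : Type*} [Fintype Ω] (d : ℕ)
    (E : Fin (d + 1) → Matrix Ω Ω ℂ)
    (hherm : ∀ ℓ : Fin (d + 1), (E ℓ)ᴴ = E ℓ)
    (horth : ∀ ℓ k : Fin (d + 1), E ℓ * E k = if ℓ = k then E k else 0)
    (q : Fin (d + 1) → Fin (d + 1) → Fin (d + 1) → ℂ)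
    (hKrein : ∀ i j : Fin (d + 1),
        (E i).hadamard (E j) =
          ((Fintype.card Ω : ℂ))⁻¹ • ∑ ℓ : Fin (d + 1), q i j ℓ • E ℓ)
    (i j k : Fin (d + 1))
    (htr : 0 < ((E k).trace).re ∧ ((E k).trace).im = 0) :
    ∃ r : ℝ, 0 ≤ r ∧ q i j k = (r : ℂ) := by
  have hidem : ∀ ℓ : Fin (d + 1), E ℓ * E ℓ = E ℓ := by
    intro ℓ; simpa using horth ℓ ℓ
  -- Step 1: trace of (E i ∘ E j) * E k via the Krein expansion
  have h1 : Matrix.trace ((E i).hadamard (E j) * E k)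
      = (Fintype.card Ω : ℂ)⁻¹ * (q i j k * Matrix.trace (E k)) := by
    rw [hKrein i j, Matrix.smul_mul, Matrix.sum_mul, Matrix.trace_smul]
    simp only [Matrix.smul_mul, Matrix.trace_sum, Matrix.trace_smul, horth, smul_eq_mul,
      apply_ite Matrix.trace, Matrix.trace_zero, mul_ite, mul_zero]
    rw [Finset.sum_ite_eq' Finset.univ k]
    simp
  -- Step 2: the same trace is a nonnegative real
  set S : ℝ := ∑ z : Ω, ∑ s : Ω, ∑ t : Ω,
      Complex.normSq (∑ x : Ω, E i x s * E j x t * (starRingEnd ℂ) (E k x z)) with hS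
  have hS0 : 0 ≤ S := by
    refine Finset.sum_nonneg fun z _ => Finset.sum_nonneg fun s _ =>
      Finset.sum_nonneg fun t _ => Complex.normSq_nonneg _
  have h2 : Matrix.trace ((E i).hadamard (E j) * E k) = (S : ℂ) := by
    rw [stmt16_key (E i) (E j) (E k) (hherm i) (hherm j) (hherm k)
      (hidem i) (hidem j) (hidem k), hS]
    push_cast
    rfl
  -- trace (E k) is a positive real τ
  set τ : ℝ := ((E k).trace).re with hτ
  have hτpos : 0 < τ := htr.1
  have htrc : Matrix.trace (E k) = (τ : ℂ) := by
    apply Complex.ext <;> simp [hτ, htr.2]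
  -- n = card Ω is nonzero
  have hn : (Fintype.card Ω : ℂ) ≠ 0 := by
    intro h
    have hcard : Fintype.card Ω = 0 := by exact_mod_cast h
    have : IsEmpty Ω := Fintype.card_eq_zero_iff.mp hcard
    have : Matrix.trace (E k) = 0 := by
      simp [Matrix.trace, Finset.univ_eq_empty]
    rw [this] at htrc
    have : τ = 0 := by exact_mod_cast htrc.symm
    exact absurd this (ne_of_gt hτpos)
  -- Solve for q i j k
  have hq : q i j k = (Fintype.card Ω : ℂ) * (S : ℂ) / (τ : ℂ) := by
    have hτc : (τ : ℂ) ≠ 0 := Complex.ofReal_ne_zero.mpr (ne_of_gt hτpos)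
    have := h1.symm.trans h2
    rw [htrc] at this
    rw [eq_div_iff hτc]
    field_simp at this
    linear_combination this
  refine ⟨(Fintype.card Ω : ℝ) * S / τ, ?_, ?_⟩
  · positivity
  · rw [hq]; push_cast; ring
end
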